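/- Consider the group G of order 6 acting on (ℤ/eℤ)² generated by (a,b) ↦ (b,a) and (a,b) ↦ (e-a, b-a). For e = l² with prime l ≥ 5, the action has exactly 1 fixed point, (l²-1) orbits of size 3, and all remaining orbits of size 6; in total there are l² + (l²-1)(l²-2)/6 orbits. -/

import Mathlib

/-- `σ(a,b) = (b,a)`. -/
def sigmaPerm (e : ℕ) : Equiv.Perm (ZMod e × ZMod e) := Equiv.prodComm _ _

/-- `τ(a,b) = (e-a, b-a)`. -/
def tauPerm (e : ℕ) : Equiv.Perm (ZMod e × ZMod e) :=
  Function.Involutive.toPerm (fun x => (-x.1, x.2 - x.1)) (fun x => by simp)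

/-- The group generated by `σ` and `τ`. -/
def Gst (e : ℕ) : Subgroup (Equiv.Perm (ZMod e × ZMod e)) :=
  Subgroup.closure {sigmaPerm e, tauPerm e}

namespace OC
variable {e : ℕ}

@[simp] lemma sigma_apply (x : ZMod e × ZMod e) : sigmaPerm e x = (x.2, x.1) := rfl
@[simp] lemma tau_apply (x : ZMod e × ZMod e) : tauPerm e x = (-x.1, x.2 - x.1) := rfl

/-- The candidate orbit of `x`. -/
def Oset (x : ZMod e × ZMod e) : Set (ZMod e × ZMod e) :=
  {x, (x.2, x.1), (x.2 - x.1, -x.1), (-x.2, x.1 - x.2), (-x.1, x.2 - x.1), (x.1 - x.2, -x.2)}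

lemma mem_Oset_self (x : ZMod e × ZMod e) : x ∈ Oset x := Or.inl rfl

lemma sigma_mem {x y : ZMod e × ZMod e} (hy : y ∈ Oset x) : sigmaPerm e y ∈ Oset x := by
  obtain ⟨a, b⟩ := x
  simp only [Oset, Set.mem_insert_iff, Set.mem_singleton_iff, Prod.ext_iff] at hy ⊢
  obtain ⟨h1, h2⟩ | ⟨h1, h2⟩ | ⟨h1, h2⟩ | ⟨h1, h2⟩ | ⟨h1, h2⟩ | ⟨h1, h2⟩ := hy <;>
    simp [sigma_apply, h1, h2]

lemma tau_mem {x y : ZMod e × ZMod e} (hy : y ∈ Oset x) : tauPerm e y ∈ Oset x := by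
  obtain ⟨a, b⟩ := x
  simp only [Oset, Set.mem_insert_iff, Set.mem_singleton_iff, Prod.ext_iff] at hy ⊢
  obtain ⟨h1, h2⟩ | ⟨h1, h2⟩ | ⟨h1, h2⟩ | ⟨h1, h2⟩ | ⟨h1, h2⟩ | ⟨h1, h2⟩ := hy <;>
    · simp only [tau_apply, h1, h2]
      ring_nf
      tauto

lemma sigma_mem_Gst : sigmaPerm e ∈ Gst e := Subgroup.subset_closure (Set.mem_insert _ _)
lemma tau_mem_Gst : tauPerm e ∈ Gst e := Subgroup.subset_closure (Set.mem_insert_of_mem _ rfl)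

lemma orbit_eq (x : ZMod e × ZMod e) : MulAction.orbit (Gst e) x = Oset x := by
  have hσ : sigmaPerm e ∈ Gst e := sigma_mem_Gst
  have hτ : tauPerm e ∈ Gst e := tau_mem_Gst
  apply Set.Subset.antisymm
  · rintro y ⟨g, rfl⟩
    have key : ∀ g ∈ Gst e, ∀ y : ZMod e × ZMod e, (y ∈ Oset x ↔ g y ∈ Oset x) := by
      intro g hg
      induction hg using Subgroup.closure_induction with
      | mem g hg =>
        rcases hg with rfl | rfl
        · exact fun y => ⟨sigma_mem, fun h => by simpa using sigma_mem h⟩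
        · exact fun y => ⟨tau_mem, fun h => by simpa using tau_mem h⟩
      | one => exact fun y => by simp
      | mul a b _ _ ha hb => exact fun y => (hb y).trans (ha (b y))
      | inv a _ ha => exact fun y => ((ha (a⁻¹ y)).trans (by simp)).symm
    exact (key g.1 g.2 x).mp (mem_Oset_self x)
  · intro y hy
    rcases hy with rfl | rfl | rfl | rfl | rfl | rfl
    · exact MulAction.mem_orbit_self _
    · exact MulAction.mem_orbit_iff.mpr ⟨⟨sigmaPerm e, hσ⟩, rfl⟩
    · exact MulAction.mem_orbit_iff.mpr ⟨⟨sigmaPerm e * tauPerm e, mul_mem hσ hτ⟩, by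
        show (sigmaPerm e) (tauPerm e x) = _; simp⟩
    · exact MulAction.mem_orbit_iff.mpr ⟨⟨sigmaPerm e * tauPerm e * (sigmaPerm e * tauPerm e),
        mul_mem (mul_mem hσ hτ) (mul_mem hσ hτ)⟩, by
        show (sigmaPerm e) (tauPerm e ((sigmaPerm e) (tauPerm e x))) = _
        simp [Prod.ext_iff]; ring_nf⟩
    · exact MulAction.mem_orbit_iff.mpr ⟨⟨tauPerm e, hτ⟩, rfl⟩
    · exact MulAction.mem_orbit_iff.mpr ⟨⟨tauPerm e * sigmaPerm e * tauPerm e,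
        mul_mem (mul_mem hτ hσ) hτ⟩, by
        show (tauPerm e) ((sigmaPerm e) (tauPerm e x)) = _
        simp [Prod.ext_iff]; ring_nf⟩

lemma Oset_zero : Oset (0 : ZMod e × ZMod e) = {0} := by
  simp [Oset, Prod.ext_iff]

lemma ncard_Oset_diag {a : ZMod e} (ha : a ≠ 0) : (Oset (a, a)).ncard = 3 := by
  have h : Oset (a, a) = {(a, a), (0, -a), (-a, 0)} := by
    ext y; simp [Oset, Prod.ext_iff]; tauto
  rw [h, Set.ncard_insert_of_notMem (by
      simp only [Set.mem_insert_iff, Set.mem_singleton_iff, Prod.mk.injEq]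
      rintro (⟨h1, h2⟩ | ⟨h1, h2⟩)
      · exact ha h1
      · exact ha h2),
    Set.ncard_insert_of_notMem (by
      simp only [Set.mem_singleton_iff, Prod.mk.injEq]
      rintro ⟨h1, h2⟩; exact ha (by linear_combination h1)),
    Set.ncard_singleton]

lemma mem_diag_Oset_diag {a a' : ZMod e} (ha : a ≠ 0) (ha' : a' ≠ 0)
    (h : (a', a') ∈ Oset (a, a)) : a' = a := by
  simp only [Oset, Set.mem_insert_iff, Set.mem_singleton_iff, Prod.mk.injEq] at h
  rcases h with ⟨h1, h2⟩ | ⟨h1, h2⟩ | ⟨h1, h2⟩ | ⟨h1, h2⟩ | ⟨h1, h2⟩ | ⟨h1, h2⟩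
  · exact h1
  · exact h1
  · exact absurd (by linear_combination h1) ha'
  · exact absurd (by linear_combination h2) ha'
  · exact absurd (by linear_combination h2) ha'
  · exact absurd (by linear_combination h1) ha'

lemma ncard_Oset_axis1 {b : ZMod e} (hb : b ≠ 0) : (Oset (0, b)).ncard = 3 := by
  have h : Oset (0, b) = {(0, b), (b, 0), (-b, -b)} := by
    ext y; simp [Oset, Prod.ext_iff]; tauto
  rw [h, Set.ncard_insert_of_notMem (by
      simp only [Set.mem_insert_iff, Set.mem_singleton_iff, Prod.mk.injEq]
      rintro (⟨h1, h2⟩ | ⟨h1, h2⟩)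
      · exact hb h1.symm
      · exact hb (by linear_combination h1)),
    Set.ncard_insert_of_notMem (by
      simp only [Set.mem_singleton_iff, Prod.mk.injEq]
      rintro ⟨h1, h2⟩; exact hb (by linear_combination h2)),
    Set.ncard_singleton]

lemma ncard_Oset_axis2 {a : ZMod e} (ha : a ≠ 0) : (Oset (a, 0)).ncard = 3 := by
  have h : Oset (a, 0) = {(a, 0), (0, a), (-a, -a)} := by
    ext y; simp [Oset, Prod.ext_iff]; tauto
  rw [h, Set.ncard_insert_of_notMem (by
      simp only [Set.mem_insert_iff, Set.mem_singleton_iff, Prod.mk.injEq]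
      rintro (⟨h1, h2⟩ | ⟨h1, h2⟩)
      · exact ha h1
      · exact ha (by linear_combination h2)),
    Set.ncard_insert_of_notMem (by
      simp only [Set.mem_singleton_iff, Prod.mk.injEq]
      rintro ⟨h1, h2⟩; exact ha (by linear_combination h1)),
    Set.ncard_singleton]

lemma ncard_Oset_six {a b : ZMod e} (c2 : ∀ z : ZMod e, z + z = 0 → z = 0)
    (c3 : ∀ z : ZMod e, z + z + z = 0 → z = 0)
    (hab : a ≠ b) (ha : a ≠ 0) (hb : b ≠ 0) : (Oset (a, b)).ncard = 6 := by
  have n1 : (a, b) ∉ ({(b, a), (b - a, -a), (-b, a - b), (-a, b - a), (a - b, -b)} :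
      Set (ZMod e × ZMod e)) := by
    simp only [Set.mem_insert_iff, Set.mem_singleton_iff, Prod.mk.injEq]
    rintro (⟨h1, h2⟩ | ⟨h1, h2⟩ | ⟨h1, h2⟩ | ⟨h1, h2⟩ | ⟨h1, h2⟩)
    · exact hab h1
    · exact ha (c3 a (by linear_combination h1 + h2))
    · exact hb (c3 b (by linear_combination h1 + h2))
    · exact ha (c2 a (by linear_combination h1))
    · exact hb (c2 b (by linear_combination h2))
  have n2 : (b, a) ∉ ({(b - a, -a), (-b, a - b), (-a, b - a), (a - b, -b)} :
      Set (ZMod e × ZMod e)) := by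
    simp only [Set.mem_insert_iff, Set.mem_singleton_iff, Prod.mk.injEq]
    rintro (⟨h1, h2⟩ | ⟨h1, h2⟩ | ⟨h1, h2⟩ | ⟨h1, h2⟩)
    · exact ha (by linear_combination h1)
    · exact hb (c2 b (by linear_combination h1))
    · exact ha (c3 a (by linear_combination h1 + h2))
    · exact hb (c3 b (by linear_combination h1 + h2))
  have n3 : (b - a, -a) ∉ ({(-b, a - b), (-a, b - a), (a - b, -b)} :
      Set (ZMod e × ZMod e)) := by
    simp only [Set.mem_insert_iff, Set.mem_singleton_iff, Prod.mk.injEq]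
    rintro (⟨h1, h2⟩ | ⟨h1, h2⟩ | ⟨h1, h2⟩)
    · exact hb (c3 b (by linear_combination 2 * h1 - h2))
    · exact hb (by linear_combination h1)
    · exact hab (by linear_combination -h2)
  have n4 : (-b, a - b) ∉ ({(-a, b - a), (a - b, -b)} : Set (ZMod e × ZMod e)) := by
    simp only [Set.mem_insert_iff, Set.mem_singleton_iff, Prod.mk.injEq]
    rintro (⟨h1, h2⟩ | ⟨h1, h2⟩)
    · exact hab (by linear_combination h1)
    · exact ha (by linear_combination -h1)
  have n5 : (-a, b - a) ∉ ({(a - b, -b)} : Set (ZMod e × ZMod e)) := by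
    simp only [Set.mem_singleton_iff, Prod.mk.injEq]
    rintro ⟨h1, h2⟩
    exact ha (c3 a (by linear_combination -2 * h1 + h2))
  show ({(a, b), (b, a), (b - a, -a), (-b, a - b), (-a, b - a), (a - b, -b)} :
      Set (ZMod e × ZMod e)).ncard = 6
  rw [Set.ncard_insert_of_notMem n1, Set.ncard_insert_of_notMem n2,
    Set.ncard_insert_of_notMem n3, Set.ncard_insert_of_notMem n4,
    Set.ncard_insert_of_notMem n5, Set.ncard_singleton]

lemma card_orbit (x : ZMod e × ZMod e) :
    Nat.card (MulAction.orbit (Gst e) x) = (Oset x).ncard := by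
  rw [orbit_eq, Nat.card_coe_set_eq]

/-- Classification of orbit sizes. -/
lemma card_orbit_classify (c2 : ∀ z : ZMod e, z + z = 0 → z = 0)
    (c3 : ∀ z : ZMod e, z + z + z = 0 → z = 0) (x : ZMod e × ZMod e) :
    (x = 0 ∧ Nat.card (MulAction.orbit (Gst e) x) = 1) ∨
    ((x.1 = x.2 ∨ x.1 = 0 ∨ x.2 = 0) ∧ x ≠ 0 ∧ Nat.card (MulAction.orbit (Gst e) x) = 3) ∨
    (x.1 ≠ x.2 ∧ x.1 ≠ 0 ∧ x.2 ≠ 0 ∧ Nat.card (MulAction.orbit (Gst e) x) = 6) := by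
  obtain ⟨a, b⟩ := x
  rw [card_orbit]
  by_cases hab : a = b
  · subst hab
    by_cases ha : a = 0
    · subst ha
      exact Or.inl ⟨rfl, by rw [show ((0,0) : ZMod e × ZMod e) = 0 from rfl, Oset_zero]; simp⟩
    · exact Or.inr (Or.inl ⟨Or.inl rfl, by simp [Prod.ext_iff, ha], ncard_Oset_diag ha⟩)
  · by_cases ha : a = 0
    · subst ha
      have hb : b ≠ 0 := fun h => hab h.symm
      exact Or.inr (Or.inl ⟨Or.inr (Or.inl rfl), by simp [Prod.ext_iff, hb], ncard_Oset_axis1 hb⟩)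
    · by_cases hb : b = 0
      · subst hb
        exact Or.inr (Or.inl ⟨Or.inr (Or.inr rfl), by simp [Prod.ext_iff, ha],
          ncard_Oset_axis2 ha⟩)
      · exact Or.inr (Or.inr ⟨hab, ha, hb, ncard_Oset_six c2 c3 hab ha hb⟩)

end OC

namespace OC
variable {e : ℕ}

open MulAction

lemma fixedPoints_eq' (c2 : ∀ z : ZMod e, z + z = 0 → z = 0) :
    MulAction.fixedPoints (Gst e) (ZMod e × ZMod e) = {0} := by
  ext x
  simp only [MulAction.mem_fixedPoints, Set.mem_singleton_iff]
  constructor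
  · intro hx
    obtain ⟨a, b⟩ := x
    have hs := hx ⟨sigmaPerm e, sigma_mem_Gst⟩
    have ht := hx ⟨tauPerm e, tau_mem_Gst⟩
    have hs' : ((b, a) : ZMod e × ZMod e) = (a, b) := hs
    have ht' : ((-a, b - a) : ZMod e × ZMod e) = (a, b) := ht
    rw [Prod.mk.injEq] at hs' ht'
    have h1 : a = 0 := c2 a (by linear_combination -ht'.1)
    have h2 : b = 0 := hs'.1.trans h1
    simp [Prod.ext_iff, h1, h2]
  · rintro rfl ⟨g, hg⟩
    show g 0 = 0
    induction hg using Subgroup.closure_induction with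
    | mem g hg => rcases hg with rfl | rfl <;> simp [Prod.ext_iff]
    | one => rfl
    | mul a b _ _ ha hb => show a (b 0) = 0; rw [hb, ha]
    | inv a _ ha => conv_lhs => rw [← ha]; simp

/-- Trichotomy of orbits at the quotient level. -/
lemma orbit_trichotomy (c2 : ∀ z : ZMod e, z + z = 0 → z = 0)
    (c3 : ∀ z : ZMod e, z + z + z = 0 → z = 0)
    (ω : MulAction.orbitRel.Quotient (Gst e) (ZMod e × ZMod e)) :
    (ω = Quotient.mk'' 0 ∧ Nat.card ω.orbit = 1) ∨
    ((∃ a : ZMod e, a ≠ 0 ∧ ω = Quotient.mk'' (a, a)) ∧ Nat.card ω.orbit = 3) ∨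
    Nat.card ω.orbit = 6 := by
  have hout : ω.orbit = MulAction.orbit (Gst e) (Quotient.out ω) :=
    MulAction.orbitRel.Quotient.orbit_eq_orbit_out ω Quotient.out_eq'
  set x := Quotient.out ω with hx
  have hωx : ω = Quotient.mk'' x := (Quotient.out_eq' ω).symm
  rcases card_orbit_classify c2 c3 x with ⟨h0, hc⟩ | ⟨hline, hne, hc⟩ | ⟨_, _, _, hc⟩
  · exact Or.inl ⟨by rw [hωx, h0], by rw [hout]; exact hc⟩
  · refine Or.inr (Or.inl ⟨?_, by rw [hout]; exact hc⟩)
    obtain ⟨a, b⟩ := x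
    rcases hline with h | h | h
    · dsimp at h; subst h
      exact ⟨a, fun h0 => hne (by simp [Prod.ext_iff, h0]), hωx⟩
    · dsimp at h; subst h
      have hb : b ≠ 0 := fun h0 => hne (by simp [Prod.ext_iff, h0])
      refine ⟨-b, neg_ne_zero.mpr hb, ?_⟩
      rw [hωx]
      symm
      rw [← MulAction.orbitRel.Quotient.mem_orbit, MulAction.orbitRel.Quotient.orbit_mk,
        orbit_eq]
      simp only [Oset, Set.mem_insert_iff, Set.mem_singleton_iff, Prod.ext_iff]
      right; right; right; left
      constructor <;> simp
    · dsimp at h; subst h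
      have ha : a ≠ 0 := fun h0 => hne (by simp [Prod.ext_iff, h0])
      refine ⟨-a, neg_ne_zero.mpr ha, ?_⟩
      rw [hωx]
      symm
      rw [← MulAction.orbitRel.Quotient.mem_orbit, MulAction.orbitRel.Quotient.orbit_mk,
        orbit_eq]
      simp only [Oset, Set.mem_insert_iff, Set.mem_singleton_iff, Prod.ext_iff]
      right; right; left
      constructor <;> simp
  · exact Or.inr (Or.inr (by rw [hout]; exact hc))

end OC

namespace OC
variable {e : ℕ}

lemma card_orbit_zero' : Nat.card (MulAction.orbitRel.Quotient.orbit
    (Quotient.mk'' (0 : ZMod e × ZMod e) : MulAction.orbitRel.Quotient (Gst e) (ZMod e × ZMod e)))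
    = 1 := by
  rw [MulAction.orbitRel.Quotient.orbit_mk, card_orbit, Oset_zero, Set.ncard_singleton]

lemma card_one_orbits (c2 : ∀ z : ZMod e, z + z = 0 → z = 0)
    (c3 : ∀ z : ZMod e, z + z + z = 0 → z = 0) :
    Nat.card {ω : MulAction.orbitRel.Quotient (Gst e) (ZMod e × ZMod e) //
      Nat.card ω.orbit = 1} = 1 := by
  have key : ∀ ψ : MulAction.orbitRel.Quotient (Gst e) (ZMod e × ZMod e),
      Nat.card ψ.orbit = 1 → ψ = Quotient.mk'' 0 := by
    intro ψ hψ
    rcases orbit_trichotomy c2 c3 ψ with ⟨h, _⟩ | ⟨_, hc⟩ | hc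
    · exact h
    · omega
    · omega
  rw [Nat.card_eq_one_iff_unique]
  refine ⟨⟨?_⟩, ⟨⟨Quotient.mk'' 0, card_orbit_zero'⟩⟩⟩
  rintro ⟨ω, hω⟩ ⟨ω', hω'⟩
  exact Subtype.ext ((key ω hω).trans (key ω' hω').symm)

lemma card_three_orbits [NeZero e] (c2 : ∀ z : ZMod e, z + z = 0 → z = 0)
    (c3 : ∀ z : ZMod e, z + z + z = 0 → z = 0) :
    Nat.card {ω : MulAction.orbitRel.Quotient (Gst e) (ZMod e × ZMod e) //
      Nat.card ω.orbit = 3} = e - 1 := by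
  let f : {a : ZMod e // a ≠ 0} → {ω : MulAction.orbitRel.Quotient (Gst e)
      (ZMod e × ZMod e) // Nat.card ω.orbit = 3} := fun a =>
    ⟨Quotient.mk'' (a.1, a.1), by
      rw [MulAction.orbitRel.Quotient.orbit_mk, card_orbit]
      exact ncard_Oset_diag a.2⟩
  have hinj : Function.Injective f := by
    rintro ⟨a, ha⟩ ⟨a', ha'⟩ h
    have h' : Quotient.mk'' ((a, a) : ZMod e × ZMod e) = Quotient.mk'' ((a', a') :
        ZMod e × ZMod e) := congrArg Subtype.val h
    have hm : ((a, a) : ZMod e × ZMod e) ∈ MulAction.orbit (Gst e) (a', a') := by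
      have := MulAction.orbitRel.Quotient.mem_orbit (G := Gst e)
        (a := ((a, a) : ZMod e × ZMod e)) (x := Quotient.mk'' ((a', a') : ZMod e × ZMod e))
      rw [MulAction.orbitRel.Quotient.orbit_mk] at this
      exact this.mpr h'
    rw [orbit_eq] at hm
    exact Subtype.ext (mem_diag_Oset_diag ha' ha hm)
  have hsurj : Function.Surjective f := by
    rintro ⟨ω, hω⟩
    rcases orbit_trichotomy c2 c3 ω with ⟨_, hc⟩ | ⟨⟨a, ha, hωa⟩, _⟩ | hc
    · omega
    · exact ⟨⟨a, ha⟩, Subtype.ext hωa.symm⟩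
    · omega
  rw [← Nat.card_congr (Equiv.ofBijective f ⟨hinj, hsurj⟩), Nat.card_eq_fintype_card]
  classical
  rw [Fintype.card_subtype_compl (p := fun a : ZMod e => a = 0), ZMod.card,
    Fintype.card_subtype_eq]

end OC

namespace OC
variable {e : ℕ}

lemma card_quotient [NeZero e] (c2 : ∀ z : ZMod e, z + z = 0 → z = 0)
    (c3 : ∀ z : ZMod e, z + z + z = 0 → z = 0) (he : 2 ≤ e) :
    Nat.card (MulAction.orbitRel.Quotient (Gst e) (ZMod e × ZMod e)) =
      e + (e - 1) * (e - 2) / 6 := by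
  classical
  set Ω := MulAction.orbitRel.Quotient (Gst e) (ZMod e × ZMod e) with hΩ
  letI : Fintype Ω := Fintype.ofFinite _
  letI : ∀ ω : Ω, Fintype ω.orbit := fun ω => Fintype.ofFinite _
  set c : Ω → ℕ := fun ω => Nat.card ω.orbit with hc
  have htri : ∀ ω : Ω, c ω = 1 ∨ c ω = 3 ∨ c ω = 6 := by
    intro ω
    rcases orbit_trichotomy c2 c3 ω with ⟨_, h⟩ | ⟨_, h⟩ | h
    · exact Or.inl h
    · exact Or.inr (Or.inl h)
    · exact Or.inr (Or.inr h)
  -- filters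
  set F1 := Finset.univ.filter (fun ω : Ω => c ω = 1) with hF1
  set F3 := Finset.univ.filter (fun ω : Ω => c ω = 3) with hF3
  set F6 := Finset.univ.filter (fun ω : Ω => c ω = 6) with hF6
  have hff3 : Finset.univ.filter (fun ω : Ω => ¬c ω = 1 ∧ c ω = 3) = F3 := by
    rw [hF3]; apply Finset.filter_congr; intro ω _
    constructor
    · rintro ⟨_, h⟩; exact h
    · intro h; exact ⟨by omega, h⟩
  have hff6 : Finset.univ.filter (fun ω : Ω => ¬c ω = 1 ∧ ¬c ω = 3) = F6 := by
    rw [hF6]; apply Finset.filter_congr; intro ω _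
    constructor
    · rintro ⟨h1, h3⟩; rcases htri ω with h | h | h <;> omega
    · intro h; exact ⟨by omega, by omega⟩
  -- cardinality split
  have hcardsplit : Fintype.card Ω = F1.card + F3.card + F6.card := by
    have a1 := Finset.card_filter_add_card_filter_not
      (s := Finset.univ (α := Ω)) (p := fun ω => c ω = 1)
    have a2 := Finset.card_filter_add_card_filter_not
      (s := Finset.univ.filter (fun ω : Ω => ¬c ω = 1)) (p := fun ω => c ω = 3)
    rw [Finset.filter_filter, Finset.filter_filter, hff3, hff6] at a2
    rw [← hF1] at a1
    rw [← Finset.card_univ]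
    omega
  -- sum split
  have hsum : ∑ ω : Ω, c ω = e * e := by
    have h1 : Nat.card (ZMod e × ZMod e) = e * e := by
      simp [Nat.card_eq_fintype_card, ZMod.card]
    rw [← h1, Nat.card_congr (MulAction.selfEquivSigmaOrbits' (Gst e) (ZMod e × ZMod e)),
      Nat.card_eq_fintype_card, Fintype.card_sigma]
    exact Finset.sum_congr rfl fun ω _ => Nat.card_eq_fintype_card
  have hsumsplit : ∑ ω : Ω, c ω = F1.card * 1 + F3.card * 3 + F6.card * 6 := by
    have a1 := Finset.sum_filter_add_sum_filter_not
      (Finset.univ (α := Ω)) (fun ω => c ω = 1) c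
    have a2 := Finset.sum_filter_add_sum_filter_not
      (Finset.univ.filter (fun ω : Ω => ¬c ω = 1)) (fun ω => c ω = 3) c
    rw [Finset.filter_filter, Finset.filter_filter, hff3, hff6] at a2
    rw [← hF1] at a1
    have s1 : ∑ ω ∈ F1, c ω = F1.card * 1 := by
      rw [Finset.sum_congr rfl (fun ω hω => (Finset.mem_filter.mp hω).2), Finset.sum_const,
        smul_eq_mul]
    have s3 : ∑ ω ∈ F3, c ω = F3.card * 3 := by
      rw [Finset.sum_congr rfl (fun ω hω => (Finset.mem_filter.mp hω).2), Finset.sum_const,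
        smul_eq_mul]
    have s6 : ∑ ω ∈ F6, c ω = F6.card * 6 := by
      rw [Finset.sum_congr rfl (fun ω hω => (Finset.mem_filter.mp hω).2), Finset.sum_const,
        smul_eq_mul]
    omega
  -- identify F1, F3 cards
  have h1 : F1.card = 1 := by
    rw [hF1, ← Fintype.card_subtype, ← Nat.card_eq_fintype_card]
    exact card_one_orbits c2 c3
  have h3 : F3.card = e - 1 := by
    rw [hF3, ← Fintype.card_subtype, ← Nat.card_eq_fintype_card]
    exact card_three_orbits c2 c3
  have h6 : 6 * F6.card = (e - 1) * (e - 2) := by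
    have key : 1 + 3 * (e - 1) + 6 * F6.card = e * e := by omega
    zify [show 1 ≤ e by omega, show 2 ≤ e by omega] at key ⊢
    linear_combination key
  rw [Nat.card_eq_fintype_card, hcardsplit, h1, h3]
  have h6' : F6.card = (e - 1) * (e - 2) / 6 := by omega
  omega

end OC

/-- For `e = l²` with prime `l ≥ 5`, the action of `⟨σ,τ⟩` on `(ℤ/eℤ)²` has
exactly one fixed point, `l²-1` orbits of size 3, all other orbits of size 6,
and `l² + (l²-1)(l²-2)/6` orbits in total. -/
theorem orbit_count_lsq (l : ℕ) (hl : l.Prime) (hl5 : 5 ≤ l) :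
    Nat.card (MulAction.fixedPoints (Gst (l ^ 2)) (ZMod (l ^ 2) × ZMod (l ^ 2))) = 1 ∧
    Nat.card {ω : MulAction.orbitRel.Quotient (Gst (l ^ 2)) (ZMod (l ^ 2) × ZMod (l ^ 2)) //
        Nat.card ω.orbit = 3} = l ^ 2 - 1 ∧
    (∀ ω : MulAction.orbitRel.Quotient (Gst (l ^ 2)) (ZMod (l ^ 2) × ZMod (l ^ 2)),
        Nat.card ω.orbit = 1 ∨ Nat.card ω.orbit = 3 ∨ Nat.card ω.orbit = 6) ∧
    Nat.card (MulAction.orbitRel.Quotient (Gst (l ^ 2)) (ZMod (l ^ 2) × ZMod (l ^ 2))) =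
      l ^ 2 + (l ^ 2 - 1) * (l ^ 2 - 2) / 6 := by
  haveI : NeZero (l ^ 2) := ⟨pow_ne_zero 2 hl.pos.ne'⟩
  have he : 2 ≤ l ^ 2 := by
    have := Nat.pow_le_pow_left hl5 2
    omega
  have hu2 : IsUnit (2 : ZMod (l ^ 2)) := by
    rw [show ((2 : ZMod (l ^ 2))) = ((2 : ℕ) : ZMod (l ^ 2)) by norm_num,
      ZMod.isUnit_iff_coprime]
    exact ((Nat.coprime_primes Nat.prime_two hl).mpr (by omega)).pow_right 2
  have hu3 : IsUnit (3 : ZMod (l ^ 2)) := by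
    rw [show ((3 : ZMod (l ^ 2))) = ((3 : ℕ) : ZMod (l ^ 2)) by norm_num,
      ZMod.isUnit_iff_coprime]
    exact ((Nat.coprime_primes Nat.prime_three hl).mpr (by omega)).pow_right 2
  have c2 : ∀ z : ZMod (l ^ 2), z + z = 0 → z = 0 := fun z h =>
    (hu2.mul_right_eq_zero).mp (by linear_combination h)
  have c3 : ∀ z : ZMod (l ^ 2), z + z + z = 0 → z = 0 := fun z h =>
    (hu3.mul_right_eq_zero).mp (by linear_combination h)
  refine ⟨?_, OC.card_three_orbits c2 c3, ?_, OC.card_quotient c2 c3 he⟩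
  · rw [OC.fixedPoints_eq' c2, Nat.card_coe_set_eq, Set.ncard_singleton]
  · intro ω
    rcases OC.orbit_trichotomy c2 c3 ω with ⟨_, h⟩ | ⟨_, h⟩ | h
    · exact Or.inl h
    · exact Or.inr (Or.inl h)
    · exact Or.inr (Or.inr h)
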